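/- Let A be an n×n symmetric Z-matrix (all off-diagonal entries nonpositive). Then A is positive semidefinite if and only if there exists a vector d with all components positive such that Ad ≥ 0 componentwise. -/

import Mathlib

open Matrix Finset

namespace ZMatrixAux

variable {m : Type*} [Fintype m] [DecidableEq m]

lemma isHermitian_of_isSymm (A : Matrix m m ℝ) (h : A.IsSymm) : A.IsHermitian := by
  rw [Matrix.IsHermitian, conjTranspose_eq_transpose_of_trivial]
  exact h

/-- Easy direction: a symmetric Z-matrix with a positive vector `d` such that `A d ≥ 0`
is positive semidefinite. -/
lemma psd_of_diag (A : Matrix m m ℝ) (hsym : A.IsSymm)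
    (hZ : ∀ i j, i ≠ j → A i j ≤ 0) (d : m → ℝ) (hd : ∀ i, 0 < d i)
    (hAd : ∀ i, 0 ≤ A.mulVec d i) : A.PosSemidef := by
  refine PosSemidef.of_dotProduct_mulVec_nonneg (isHermitian_of_isSymm A hsym) fun x => ?_
  have hstar : star x = x := by
    funext i; simp
  rw [hstar]
  set y : m → ℝ := fun i => x i / d i with hy
  have hx : ∀ i, x i = d i * y i := fun i => by
    simp only [hy]
    rw [← mul_div_assoc, mul_comm, mul_div_assoc, div_self (hd i).ne', mul_one]
  set M : Matrix m m ℝ := Matrix.of fun i j => d i * A i j * d j with hM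
  have hMZ : ∀ i j, i ≠ j → M i j ≤ 0 := by
    intro i j hij
    have h1 := hZ i j hij
    have h2 := hd i
    have h3 := hd j
    simp only [hM, Matrix.of_apply]
    nlinarith [mul_pos h2 h3, mul_nonpos_of_nonpos_of_nonneg h1 (mul_pos h2 h3).le]
  have key : x ⬝ᵥ A *ᵥ x = ∑ i, ∑ j, M i j * (y i * y j) := by
    simp only [dotProduct, mulVec, Finset.mul_sum, hM, Matrix.of_apply]
    refine Finset.sum_congr rfl fun i _ => Finset.sum_congr rfl fun j _ => ?_
    rw [hx i, hx j]; ring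
  rw [key]
  have hrow : ∀ i, 0 ≤ ∑ j, M i j * y i ^ 2 := by
    intro i
    have he : ∑ j, M i j * y i ^ 2 = (d i * y i ^ 2) * A.mulVec d i := by
      simp only [hM, Matrix.of_apply, mulVec, dotProduct, Finset.mul_sum]
      exact Finset.sum_congr rfl fun j _ => by ring
    rw [he]
    exact mul_nonneg (mul_nonneg (hd i).le (sq_nonneg _)) (hAd i)
  have hcol : ∀ j, 0 ≤ ∑ i, M i j * y j ^ 2 := by
    intro j
    have he : ∑ i, M i j * y j ^ 2 = (d j * y j ^ 2) * A.mulVec d j := by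
      simp only [hM, Matrix.of_apply, mulVec, dotProduct, Finset.mul_sum]
      refine Finset.sum_congr rfl fun i _ => ?_
      rw [hsym.apply j i]
      ring
    rw [he]
    exact mul_nonneg (mul_nonneg (hd j).le (sq_nonneg _)) (hAd j)
  have step : ∀ i j, M i j * ((y i ^ 2 + y j ^ 2) / 2) ≤ M i j * (y i * y j) := by
    intro i j
    rcases eq_or_ne i j with rfl | hij
    · apply le_of_eq; ring
    · have h1 := hMZ i j hij
      nlinarith [sq_nonneg (y i - y j)]
  have e : ∑ i, ∑ j, M i j * ((y i ^ 2 + y j ^ 2) / 2)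
      = (∑ i, ∑ j, M i j * y i ^ 2) / 2 + (∑ i, ∑ j, M i j * y j ^ 2) / 2 := by
    have h : ∀ i j, M i j * ((y i ^ 2 + y j ^ 2) / 2)
        = M i j * y i ^ 2 / 2 + M i j * y j ^ 2 / 2 := fun i j => by ring
    simp_rw [h, Finset.sum_add_distrib, Finset.sum_div]
  calc (0 : ℝ) ≤ ∑ i, ∑ j, M i j * ((y i ^ 2 + y j ^ 2) / 2) := by
        rw [e]
        have h1 : 0 ≤ ∑ i, ∑ j, M i j * y i ^ 2 :=
          Finset.sum_nonneg fun i _ => hrow i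
        have h2 : 0 ≤ ∑ i, ∑ j, M i j * y j ^ 2 := by
          rw [Finset.sum_comm]
          exact Finset.sum_nonneg fun j _ => hcol j
        linarith
    _ ≤ ∑ i, ∑ j, M i j * (y i * y j) :=
        Finset.sum_le_sum fun i _ => Finset.sum_le_sum fun j _ => step i j

/-- Positive definite case of the forward direction. -/
lemma posdef_case (A : Matrix m m ℝ) (hZ : ∀ i j, i ≠ j → A i j ≤ 0) (hPD : A.PosDef) :
    ∃ d : m → ℝ, (∀ i, 0 < d i) ∧ ∀ i, 0 ≤ A.mulVec d i := by
  have hunit : IsUnit A.det := hPD.det_pos.ne'.isUnit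
  set d : m → ℝ := A⁻¹ *ᵥ (fun _ => 1) with hdd
  have hAd : A *ᵥ d = fun _ => 1 := by
    rw [hdd, mulVec_mulVec, mul_nonsing_inv A hunit, one_mulVec]
  set u : m → ℝ := fun i => max (-(d i)) 0 with hu
  set v : m → ℝ := fun i => max (d i) 0 with hv
  have hu0 : ∀ i, 0 ≤ u i := fun i => le_max_right _ _
  have hv0 : ∀ i, 0 ≤ v i := fun i => le_max_right _ _
  have huv : ∀ i, u i * v i = 0 := by
    intro i
    rcases le_total (d i) 0 with h | h
    · have : v i = 0 := max_eq_right h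
      rw [this, mul_zero]
    · have : u i = 0 := max_eq_right (neg_nonpos.mpr h)
      rw [this, zero_mul]
  have hd_uv : ∀ i, d i = v i - u i := by
    intro i
    rcases le_total (d i) 0 with h | h
    · have h1 : v i = 0 := max_eq_right h
      have h2 : u i = -(d i) := max_eq_left (by linarith)
      rw [h1, h2]; ring
    · have h1 : v i = d i := max_eq_left h
      have h2 : u i = 0 := max_eq_right (neg_nonpos.mpr h)
      rw [h1, h2]; ring
  have hquad : u ⬝ᵥ A *ᵥ u ≤ 0 := by
    have hvd : A *ᵥ d = A *ᵥ v - A *ᵥ u := by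
      rw [← Matrix.mulVec_sub]
      have hvu : v - u = d := funext fun i => by rw [Pi.sub_apply]; exact (hd_uv i).symm
      rw [hvu]
    have hsplit : u ⬝ᵥ A *ᵥ u = u ⬝ᵥ A *ᵥ v - u ⬝ᵥ A *ᵥ d := by
      rw [hvd, dotProduct_sub]; ring
    have h1 : u ⬝ᵥ A *ᵥ d = ∑ i, u i := by
      rw [hAd]; simp [dotProduct]
    have h2 : u ⬝ᵥ A *ᵥ v ≤ 0 := by
      simp only [dotProduct, mulVec, Finset.mul_sum]
      apply Finset.sum_nonpos
      intro i _
      apply Finset.sum_nonpos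
      intro j _
      rcases eq_or_ne i j with rfl | hij
      · have h := huv i
        apply le_of_eq
        linear_combination A i i * h
      · exact mul_nonpos_of_nonneg_of_nonpos (hu0 i)
          (mul_nonpos_of_nonpos_of_nonneg (hZ i j hij) (hv0 j))
    have h3 : 0 ≤ ∑ i, u i := Finset.sum_nonneg fun i _ => hu0 i
    rw [hsplit, h1]
    linarith
  have hu_eq : u = 0 := by
    by_contra h
    have hlt := hPD.dotProduct_mulVec_pos h
    have hstar : star u = u := by funext i; simp
    rw [hstar] at hlt
    linarith
  have hdnn : ∀ i, 0 ≤ d i := by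
    intro i
    have h1 : u i = 0 := congrFun hu_eq i
    have h2 : -(d i) ≤ u i := le_max_left _ _
    linarith [h2.trans_eq h1]
  have hdpos : ∀ i, 0 < d i := by
    intro i
    rcases (hdnn i).lt_or_eq with h | h
    · exact h
    · exfalso
      have h1 : (A *ᵥ d) i = 1 := by rw [hAd]
      have h2 : (A *ᵥ d) i ≤ 0 := by
        simp only [mulVec, dotProduct]
        apply Finset.sum_nonpos
        intro j _
        rcases eq_or_ne j i with rfl | hij
        · rw [← h, mul_zero]
        · exact mul_nonpos_of_nonpos_of_nonneg (hZ i j hij.symm) (hdnn j)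
      linarith
  exact ⟨d, hdpos, fun i => by rw [hAd]; norm_num⟩

/-- Forward direction by strong induction on the size. -/
lemma forward_aux : ∀ (N : ℕ) (m : Type) [Fintype m] [DecidableEq m] (A : Matrix m m ℝ),
    Fintype.card m ≤ N → A.IsSymm → (∀ i j, i ≠ j → A i j ≤ 0) → A.PosSemidef →
    ∃ d : m → ℝ, (∀ i, 0 < d i) ∧ ∀ i, 0 ≤ A.mulVec d i := by
  intro N
  induction N with
  | zero =>
    intro m _ _ A hcard _ _ _
    have hemp : IsEmpty m := Fintype.card_eq_zero_iff.mp (le_antisymm hcard (Nat.zero_le _))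
    exact ⟨fun _ => 1, fun i => (hemp.false i).elim, fun i => (hemp.false i).elim⟩
  | succ N ih =>
    intro m _ _ A hcard hsym hZ hPSD
    by_cases hPD : A.PosDef
    · exact posdef_case A hZ hPD
    · obtain ⟨x, hx0, hxq⟩ : ∃ x : m → ℝ, x ≠ 0 ∧ x ⬝ᵥ A *ᵥ x ≤ 0 := by
        by_contra h
        push_neg at h
        refine hPD (PosDef.of_dotProduct_mulVec_pos hPSD.1 fun z hz => ?_)
        have hstar : star z = z := by funext i; simp
        rw [hstar]
        exact h z hz
      have hq0 : x ⬝ᵥ A *ᵥ x = 0 := by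
        have := hPSD.dotProduct_mulVec_nonneg x
        have hstar : star x = x := by funext i; simp
        rw [hstar] at this
        linarith
      have hker : A *ᵥ x = 0 := by
        have hiff := hPSD.dotProduct_mulVec_zero_iff x
        have hstar : star x = x := by funext i; simp
        rw [hstar] at hiff
        exact hiff.mp hq0
      set b : m → ℝ := fun i => |x i| with hb
      have hb0 : ∀ i, 0 ≤ b i := fun i => abs_nonneg _
      have hbq : b ⬝ᵥ A *ᵥ b ≤ 0 := by
        have hle : b ⬝ᵥ A *ᵥ b ≤ x ⬝ᵥ A *ᵥ x := by
          simp only [dotProduct, mulVec, Finset.mul_sum]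
          refine Finset.sum_le_sum fun i _ => Finset.sum_le_sum fun j _ => ?_
          rcases eq_or_ne i j with rfl | hij
          · apply le_of_eq
            simp only [hb]
            linear_combination A i i * sq_abs (x i)
          · have h1 := hZ i j hij
            have h2 : x i * x j ≤ |x i| * |x j| := by
              calc x i * x j ≤ |x i * x j| := le_abs_self _
                _ = |x i| * |x j| := abs_mul _ _
            simp only [hb]
            nlinarith
        linarith [hq0 ▸ hle]
      have hbq0 : b ⬝ᵥ A *ᵥ b = 0 := by
        have := hPSD.dotProduct_mulVec_nonneg b
        have hstar : star b = b := by funext i; simp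
        rw [hstar] at this
        linarith
      have hkerb : A *ᵥ b = 0 := by
        have hiff := hPSD.dotProduct_mulVec_zero_iff b
        have hstar : star b = b := by funext i; simp
        rw [hstar] at hiff
        exact hiff.mp hbq0
      have hA0 : ∀ i j, x i = 0 → x j ≠ 0 → A i j = 0 := by
        intro i j hi hj
        have hrow : ∑ k, A i k * b k = 0 := by
          have := congrFun hkerb i
          simpa [mulVec, dotProduct] using this
        have hterm : ∀ k ∈ Finset.univ, A i k * b k ≤ 0 := by
          intro k _
          rcases eq_or_ne k i with rfl | hk
          · simp [hb, hi]
          · exact mul_nonpos_of_nonpos_of_nonneg (hZ i k hk.symm) (hb0 k)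
        have hz := (Finset.sum_eq_zero_iff_of_nonpos hterm).mp hrow j (Finset.mem_univ j)
        have hbj : 0 < b j := abs_pos.mpr hj
        rcases mul_eq_zero.mp hz with h | h
        · exact h
        · exact absurd h hbj.ne'
      have hA0' : ∀ i j, x i ≠ 0 → x j = 0 → A i j = 0 := by
        intro i j hi hj
        rw [← hsym.apply i j]
        exact hA0 j i hj hi
      -- restrict to the complement of the support of x
      set B : Matrix {i // x i = 0} {i // x i = 0} ℝ :=
        Matrix.of (fun i j => A i.1 j.1) with hB
      have hsum : ∀ f : m → ℝ, (∀ i, x i ≠ 0 → f i = 0) →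
          ∑ i, f i = ∑ i : {i // x i = 0}, f i.1 := by
        intro f hf
        rw [← Finset.sum_filter_add_sum_filter_not Finset.univ (fun i => x i = 0) f]
        have h1 : ∑ i ∈ Finset.univ.filter (fun i => ¬ x i = 0), f i = 0 :=
          Finset.sum_eq_zero fun i hi => hf i (Finset.mem_filter.mp hi).2
        rw [h1, add_zero]
        exact Finset.sum_subtype _ (by simp) f
      set ext0 : ({i // x i = 0} → ℝ) → (m → ℝ) :=
        fun g i => if h : x i = 0 then g ⟨i, h⟩ else 0 with hext0
      have hmv : ∀ (g : {i // x i = 0} → ℝ) (i : m),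
          (A *ᵥ ext0 g) i = ∑ j : {i // x i = 0}, A i j.1 * g j := by
        intro g i
        simp only [mulVec, dotProduct]
        rw [hsum (fun j => A i j * ext0 g j) (fun j hj => by simp [hext0, hj])]
        refine Finset.sum_congr rfl fun j _ => ?_
        congr 1
        simp [hext0, j.2]
      have hquad : ∀ g : {i // x i = 0} → ℝ, g ⬝ᵥ B *ᵥ g = ext0 g ⬝ᵥ A *ᵥ ext0 g := by
        intro g
        simp only [dotProduct]
        rw [hsum (fun i => ext0 g i * (A *ᵥ ext0 g) i)
          (fun i hi => by simp [hext0, hi])]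
        refine Finset.sum_congr rfl fun j _ => ?_
        rw [hmv g j.1]
        have hext : ext0 g j.1 = g j := by simp [hext0, j.2]
        rw [hext]
        congr 1
      have hBsym : B.IsSymm := by
        ext i j
        simp only [hB, Matrix.transpose_apply, Matrix.of_apply]
        exact hsym.apply i.1 j.1
      have hBpsd : B.PosSemidef := by
        refine PosSemidef.of_dotProduct_mulVec_nonneg (isHermitian_of_isSymm B hBsym) fun g => ?_
        have hstar : star g = g := by funext i; simp
        rw [hstar, hquad g]
        have := hPSD.dotProduct_mulVec_nonneg (ext0 g)
        have hstar2 : star (ext0 g) = ext0 g := by funext i; simp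
        rwa [hstar2] at this
      have hBZ : ∀ i j : {i // x i = 0}, i ≠ j → B i j ≤ 0 := by
        intro i j hij
        exact hZ i.1 j.1 (fun h => hij (Subtype.ext h))
      obtain ⟨i₀, hi₀⟩ : ∃ i, x i ≠ 0 := by
        by_contra h
        push_neg at h
        exact hx0 (funext h)
      have hcard' : Fintype.card {i // x i = 0} ≤ N := by
        have hlt : Fintype.card {i // x i = 0} < Fintype.card m :=
          Fintype.card_subtype_lt (p := fun i => x i = 0) hi₀
        omega
      obtain ⟨d', hd'pos, hd'⟩ := ih {i // x i = 0} B hcard' hBsym hBZ hBpsd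
      refine ⟨fun i => b i + ext0 d' i, ?_, ?_⟩
      · intro i
        show 0 < b i + ext0 d' i
        by_cases h : x i = 0
        · have h1 : b i = 0 := by simp [hb, h]
          have h2 : ext0 d' i = d' ⟨i, h⟩ := by simp [hext0, h]
          rw [h1, h2, zero_add]
          exact hd'pos ⟨i, h⟩
        · have h1 : ext0 d' i = 0 := by simp [hext0, h]
          have h2 : 0 < b i := abs_pos.mpr h
          rw [h1, add_zero]
          exact h2
      · intro i
        have hadd : A *ᵥ (fun i => b i + ext0 d' i) = A *ᵥ b + A *ᵥ ext0 d' := by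
          have : (fun i => b i + ext0 d' i) = b + ext0 d' := rfl
          rw [this, Matrix.mulVec_add]
        rw [hadd]
        have hzero : (A *ᵥ b) i = 0 := by rw [hkerb]; rfl
        have : (A *ᵥ b + A *ᵥ ext0 d') i = (A *ᵥ ext0 d') i := by
          simp [hzero]
        rw [this, hmv d' i]
        by_cases h : x i = 0
        · have := hd' ⟨i, h⟩
          simpa [mulVec, dotProduct, hB] using this
        · apply le_of_eq
          symm
          apply Finset.sum_eq_zero
          intro j _
          rw [hA0' i j.1 h j.2, zero_mul]

end ZMatrixAux

open Matrix

theorem symm_Z_matrix_posSemidef_iff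
    {n : ℕ} (A : Matrix (Fin n) (Fin n) ℝ) (hsym : A.IsSymm)
    (hZ : ∀ i j : Fin n, i ≠ j → A i j ≤ 0) :
    A.PosSemidef ↔ ∃ d : Fin n → ℝ, (∀ i, 0 < d i) ∧ ∀ i, 0 ≤ A.mulVec d i := by
  constructor
  · intro hPSD
    exact ZMatrixAux.forward_aux (Fintype.card (Fin n)) (Fin n) A le_rfl hsym hZ hPSD
  · rintro ⟨d, hd, hAd⟩
    exact ZMatrixAux.psd_of_diag A hsym hZ d hd hAd
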